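/- Let (A, φ) be a noncommutative probability space, and let A_1, ..., A_k be unital subalgebras of A which are free in (A, φ). Suppose D : A → A is a derivation such that D(A_i) ⊆ A_i for every 1 ≤ i ≤ k. Set φ' := φ ∘ D (which satisfies φ'(1) = 0, so (A, φ, φ') is an incps). Then A_1, ..., A_k are infinitesimally free in (A, φ, φ'). -/

import Mathlib

namespace InfFree

open scoped BigOperators

/-- `π` is a partition of `Fin n` into nonempty blocks. -/
def IsPartition {n : ℕ} (π : Finset (Finset (Fin n))) : Prop :=
  (∀ V ∈ π, V.Nonempty) ∧ ∀ i : Fin n, ∃! V : Finset (Fin n), V ∈ π ∧ i ∈ V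

/-- `π` is non-crossing: there are no `p < q < r < s` with `p, r` in one block and
`q, s` in another block. -/
def IsNonCrossing {n : ℕ} (π : Finset (Finset (Fin n))) : Prop :=
  ∀ p q r s : Fin n, p < q → q < r → r < s →
    ∀ V ∈ π, ∀ W ∈ π, p ∈ V → r ∈ V → q ∈ W → s ∈ W → V = W

open Classical in
/-- The finset `NC n` of non-crossing partitions of `Fin n`. -/
noncomputable def NC (n : ℕ) : Finset (Finset (Finset (Fin n))) :=
  Finset.univ.filter fun π => IsPartition π ∧ IsNonCrossing π

/-- Restriction of an `n`-tuple to a subset `V ⊆ Fin n`, listed in increasing order. -/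
def restrict {α : Type*} {n : ℕ} (a : Fin n → α) (V : Finset (Fin n)) :
    Fin V.card → α :=
  fun i => a (V.orderIsoOfFin rfl i).1

/-- `κ` is the family of `R`-valued non-crossing cumulant functionals of `φ`, i.e.
the moment-cumulant formulas hold. -/
def MomentCumulant {A : Type*} [Ring A] {R : Type*} [CommRing R]
    (φ : A → R) (κ : ∀ n : ℕ, (Fin n → A) → R) : Prop :=
  ∀ (n : ℕ), 1 ≤ n → ∀ a : Fin n → A,
    φ (List.ofFn a).prod = ∑ π ∈ NC n, ∏ V ∈ π, κ V.card (restrict a V)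

/-- `κ'` is the family of infinitesimal non-crossing cumulant functionals of
`(φ, φ')`, where `κ` is the family of non-crossing cumulant functionals of `φ`. -/
def InfMomentCumulant {A : Type*} [Ring A]
    (φ' : A → ℂ) (κ κ' : ∀ n : ℕ, (Fin n → A) → ℂ) : Prop :=
  ∀ (n : ℕ), 1 ≤ n → ∀ a : Fin n → A,
    φ' (List.ofFn a).prod =
      ∑ π ∈ NC n, ∑ V ∈ π,
        κ' V.card (restrict a V) * ∏ W ∈ π.erase V, κ W.card (restrict a W)

/-- Consecutive indices are distinct. -/
def Alternating {n k : ℕ} (i : Fin n → Fin k) : Prop :=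
  ∀ (m : ℕ) (h : m + 1 < n), i ⟨m, Nat.lt_of_succ_lt h⟩ ≠ i ⟨m + 1, h⟩

/-- Freeness of the family of subsets `S` with respect to `φ`. -/
def FreeSets {A : Type*} [Ring A] {k : ℕ} (φ : A → ℂ) (S : Fin k → Set A) : Prop :=
  ∀ (n : ℕ), 1 ≤ n → ∀ i : Fin n → Fin k, Alternating i →
    ∀ a : Fin n → A, (∀ m, a m ∈ S (i m)) → (∀ m, φ (a m) = 0) →
      φ (List.ofFn a).prod = 0

/-- Infinitesimal freeness of the family of subsets `S` with respect to `(φ, φ')`. -/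
def InfFreeSets {A : Type*} [Ring A] {k : ℕ} (φ φ' : A → ℂ) (S : Fin k → Set A) : Prop :=
  ∀ (n : ℕ) (hn : 1 ≤ n) (i : Fin n → Fin k), Alternating i →
    ∀ a : Fin n → A, (∀ m, a m ∈ S (i m)) → (∀ m, φ (a m) = 0) →
      φ (List.ofFn a).prod = 0 ∧
      ((Odd n ∧ ∀ m : Fin n, i m = i m.rev) →
        φ' (List.ofFn a).prod =
          (∏ j : Fin ((n - 1) / 2),
              φ (a ⟨j, by have := j.isLt; omega⟩ *
                 a ⟨n - 1 - j, by have := j.isLt; omega⟩)) *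
            φ' (a ⟨n / 2, by omega⟩)) ∧
      (¬(Odd n ∧ ∀ m : Fin n, i m = i m.rev) → φ' (List.ofFn a).prod = 0)

section Aux

variable {A : Type*} [Ring A] [Algebra ℂ A] {k : ℕ}
  (φ : A →ₗ[ℂ] ℂ) (Alg : Fin k → Subalgebra ℂ A)

/-- Freeness in list/word form. -/
lemma free_word (hfree : FreeSets (⇑φ) (fun i => (Alg i : Set A)))
    (w : List (A × Fin k)) (hw : w ≠ [])
    (hmem : ∀ p ∈ w, p.1 ∈ Alg p.2) (hcent : ∀ p ∈ w, φ p.1 = 0)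
    (hch : (w.map Prod.snd).Chain' (· ≠ ·)) :
    φ (w.map Prod.fst).prod = 0 := by
  have hn : 1 ≤ w.length := by
    cases w with
    | nil => simp at hw
    | cons x t => simp
  have halt : Alternating (fun m : Fin w.length => (w.get m).2) := by
    intro m h
    have h2 : m < (w.map Prod.snd).length - 1 := by simp; omega
    have := List.isChain_iff_getElem.mp hch m (by omega)
    simpa using this
  have key := hfree w.length hn _ halt (fun m => (w.get m).1)
      (fun m => hmem _ (w.get_mem _)) (fun m => hcent _ (w.get_mem _))
  have heq : List.ofFn (fun m : Fin w.length => (w.get m).1) = w.map Prod.fst := by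
    apply List.ext_getElem (by simp)
    intro t h1 h2
    simp [List.getElem_ofFn, List.get_eq_getElem]
  rwa [heq] at key

/-- The collapse lemma. -/
lemma collapse (hφ1 : φ 1 = 1) (hfree : FreeSets (⇑φ) (fun i => (Alg i : Set A))) :
    ∀ (u v : List (A × Fin k)),
    (∀ p ∈ u, p.1 ∈ Alg p.2) → (∀ p ∈ u, φ p.1 = 0) →
    (∀ p ∈ v, p.1 ∈ Alg p.2) → (∀ p ∈ v, φ p.1 = 0) →
    (u.map Prod.snd).Chain' (· ≠ ·) → (v.map Prod.snd).Chain' (· ≠ ·) →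
    φ ((u.reverse.map Prod.fst).prod * (v.map Prod.fst).prod) =
      if u.map Prod.snd = v.map Prod.snd
      then ((u.zip v).map (fun p => φ (p.1.1 * p.2.1))).prod else 0 := by
  intro u
  induction u with
  | nil =>
    intro v _ _ hvm hvc _ hchv
    cases v with
    | nil => simp [hφ1]
    | cons y v' =>
      rw [if_neg (by simp)]
      simpa using free_word φ Alg hfree (y :: v') (by simp) hvm hvc hchv
  | cons x u' ih =>
    intro v hum huc hvm hvc hchu hchv
    have hxm : x.1 ∈ Alg x.2 := hum x List.mem_cons_self
    have hchu2 : (x.2 :: u'.map Prod.snd).Chain' (· ≠ ·) := by simpa using hchu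
    have hchu' : (u'.map Prod.snd).Chain' (· ≠ ·) := (List.isChain_cons.mp hchu2).2
    have hju : ∀ z ∈ (u'.map Prod.snd).head?, x.2 ≠ z := (List.isChain_cons.mp hchu2).1
    have hum' : ∀ p ∈ u', p.1 ∈ Alg p.2 := fun p hp => hum p (List.mem_cons_of_mem _ hp)
    have huc' : ∀ p ∈ u', φ p.1 = 0 := fun p hp => huc p (List.mem_cons_of_mem _ hp)
    cases v with
    | nil =>
      rw [if_neg (by simp)]
      have := free_word φ Alg hfree ((x :: u').reverse) (by simp)
        (fun p hp => hum p (List.mem_reverse.mp hp)) (fun p hp => huc p (List.mem_reverse.mp hp))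
        (by rw [List.map_reverse]; refine List.isChain_reverse.mpr ?_
            exact List.IsChain.imp (fun a b h => Ne.symm h) hchu)
      simpa using this
    | cons y v' =>
      have hym : y.1 ∈ Alg y.2 := hvm y List.mem_cons_self
      have hchv2 : (y.2 :: v'.map Prod.snd).Chain' (· ≠ ·) := by simpa using hchv
      have hchv' : (v'.map Prod.snd).Chain' (· ≠ ·) := (List.isChain_cons.mp hchv2).2
      have hjv : ∀ z ∈ (v'.map Prod.snd).head?, y.2 ≠ z := (List.isChain_cons.mp hchv2).1
      have hvm' : ∀ p ∈ v', p.1 ∈ Alg p.2 := fun p hp => hvm p (List.mem_cons_of_mem _ hp)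
      have hvc' : ∀ p ∈ v', φ p.1 = 0 := fun p hp => hvc p (List.mem_cons_of_mem _ hp)
      have hprodu : ((x :: u').reverse.map Prod.fst).prod
          = (u'.reverse.map Prod.fst).prod * x.1 := by simp
      set P := (u'.reverse.map Prod.fst).prod with hP
      set Q := (v'.map Prod.fst).prod with hQ
      by_cases hj : x.2 = y.2
      · -- merge x and y
        set s : ℂ := φ (x.1 * y.1) with hs
        set c : A := x.1 * y.1 - s • (1 : A) with hc
        have hxy : x.1 * y.1 = c + s • (1 : A) := by rw [hc]; abel
        have hcmem : c ∈ Alg x.2 := by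
          refine Subalgebra.sub_mem _ (Subalgebra.mul_mem _ hxm ?_)
            (Subalgebra.smul_mem _ (Subalgebra.one_mem _) s)
          rw [hj]; exact hym
        have hccent : φ c = 0 := by
          rw [hc, map_sub, map_smul, hφ1]
          simp [hs]
        have hLHS : ((x :: u').reverse.map Prod.fst).prod * (((y :: v')).map Prod.fst).prod
            = P * c * Q + s • (P * Q) := by
          rw [hprodu, List.map_cons, List.prod_cons, mul_assoc P x.1 _, ← mul_assoc x.1 y.1 Q,
            ← mul_assoc P _ Q, hxy]
          simp [mul_add, add_mul, mul_smul_comm, smul_mul_assoc]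
        have hmid : φ (P * c * Q) = 0 := by
          have := free_word φ Alg hfree (u'.reverse ++ (c, x.2) :: v') (by simp)
            (by intro p hp
                rcases List.mem_append.mp hp with h | h
                · exact hum' p (List.mem_reverse.mp h)
                · rcases List.mem_cons.mp h with h | h
                  · rw [h]; exact hcmem
                  · exact hvm' p h)
            (by intro p hp
                rcases List.mem_append.mp hp with h | h
                · exact huc' p (List.mem_reverse.mp h)
                · rcases List.mem_cons.mp h with h | h
                  · rw [h]; exact hccent
                  · exact hvc' p h)
            (by rw [List.map_append]; refine List.isChain_append.mpr ?_
                refine ⟨?_, ?_, ?_⟩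
                · rw [List.map_reverse, List.isChain_reverse]
                  exact List.IsChain.imp (fun a b h => Ne.symm h) hchu'
                · rw [List.map_cons, List.isChain_cons]
                  refine ⟨fun z hz => hj ▸ hjv z hz, hchv'⟩
                · intro z hz z' hz'
                  rw [List.map_reverse, List.getLast?_reverse] at hz
                  rw [List.map_cons, List.head?_cons, Option.mem_some_iff] at hz'
                  subst hz'
                  exact Ne.symm (hju z hz))
          rw [List.map_append, List.prod_append, List.map_cons, List.prod_cons,
            ← mul_assoc] at this
          exact this
        rw [hLHS, map_add, map_smul, hmid, zero_add, smul_eq_mul,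
          ih v' hum' huc' hvm' hvc' hchu' hchv']
        simp only [List.map_cons, List.zip_cons_cons, List.prod_cons]
        by_cases h : u'.map Prod.snd = v'.map Prod.snd
        · rw [if_pos h, if_pos (by rw [hj, h])]
        · rw [if_neg h, if_neg (by simp [hj, h]), mul_zero]
      · -- alternating through the junction
        rw [if_neg (by simp [hj])]
        have := free_word φ Alg hfree ((x :: u').reverse ++ (y :: v')) (by simp)
          (by intro p hp
              rcases List.mem_append.mp hp with h | h
              · exact hum p (List.mem_reverse.mp h)
              · exact hvm p h)
          (by intro p hp
              rcases List.mem_append.mp hp with h | h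
              · exact huc p (List.mem_reverse.mp h)
              · exact hvc p h)
          (by rw [List.map_append]; refine List.isChain_append.mpr ?_
              refine ⟨?_, hchv, ?_⟩
              · rw [List.map_reverse, List.isChain_reverse]
                exact List.IsChain.imp (fun a b h => Ne.symm h) hchu
              intro z hz z' hz'
              rw [List.map_reverse, List.getLast?_reverse, List.map_cons,
                List.head?_cons, Option.mem_some_iff] at hz
              rw [List.map_cons, List.head?_cons, Option.mem_some_iff] at hz'
              subst hz; subst hz'
              exact hj)
        rw [List.map_append, List.prod_append] at this
        exact this

/-- Leibniz rule for list products. -/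
lemma D_prod (D : A →ₗ[ℂ] A) (hD : ∀ a b : A, D (a * b) = D a * b + a * D b) :
    ∀ l : List A, D l.prod
      = ∑ m : Fin l.length, (l.take m).prod * D (l.get m) * (l.drop (m + 1)).prod := by
  intro l
  induction l with
  | nil =>
    have h1 : D (1 : A) = D 1 + D 1 := by simpa using hD 1 1
    have h2 : D (1 : A) = 0 := left_eq_add.mp h1
    simp [h2]
  | cons x t ih =>
    rw [List.prod_cons, hD, ih]
    simp only [List.length_cons]
    rw [Fin.sum_univ_succ]
    congr 1
    · simp
    · rw [Finset.mul_sum]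
      refine Finset.sum_congr rfl fun m _ => ?_
      simp [List.take_succ_cons, List.prod_cons, mul_assoc]

lemma D_prod_fin (D : A →ₗ[ℂ] A) (hD : ∀ a b : A, D (a * b) = D a * b + a * D b)
    {n : ℕ} (a : Fin n → A) :
    D (List.ofFn a).prod = ∑ m : Fin n,
      ((List.ofFn a).take (m : ℕ)).prod * D (a m) * ((List.ofFn a).drop ((m : ℕ) + 1)).prod := by
  rw [D_prod D hD, ← Equiv.sum_comp (finCongr (List.length_ofFn (f := a)).symm)]
  refine Finset.sum_congr rfl fun m _ => ?_
  simp [List.get_ofFn]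


end Aux

theorem infinitesimallyFree_of_derivation_invariant
    {A : Type*} [Ring A] [Algebra ℂ A]
    (φ : A →ₗ[ℂ] ℂ) (hφ1 : φ 1 = 1)
    {k : ℕ} (Alg : Fin k → Subalgebra ℂ A)
    (hfree : FreeSets (⇑φ) (fun i => (Alg i : Set A)))
    (D : A →ₗ[ℂ] A) (hD : ∀ a b : A, D (a * b) = D a * b + a * D b)
    (hDinv : ∀ i : Fin k, ∀ a ∈ Alg i, D a ∈ Alg i) :
    InfFreeSets (⇑φ) (fun a => φ (D a)) (fun i => (Alg i : Set A)) := by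
  intro n hn i halt a hamem hacent
  classical
  set w : List (A × Fin k) := List.ofFn (fun m => (a m, i m)) with hw
  have hwlen : w.length = n := by simp [hw]
  have hwfst : w.map Prod.fst = List.ofFn a := by rw [hw, List.map_ofFn]; rfl
  have hwsnd : w.map Prod.snd = List.ofFn i := by rw [hw, List.map_ofFn]; rfl
  have hii : ∀ (p q : ℕ) (hp : p < n) (hq : q < n), p = q → i ⟨p, hp⟩ = i ⟨q, hq⟩ := by
    intro p q hp hq h; subst h; rfl
  have hai : ∀ (p q : ℕ) (hp : p < n) (hq : q < n), p = q → a ⟨p, hp⟩ = a ⟨q, hq⟩ := by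
    intro p q hp hq h; subst h; rfl
  have hwget : ∀ (t : ℕ) (h1 : t < w.length) (h2 : t < n),
      w[t]'h1 = (a ⟨t, h2⟩, i ⟨t, h2⟩) := by
    intro t h1 h2
    simp [hw]
  have hchw : (w.map Prod.snd).Chain' (· ≠ ·) := by
    rw [hwsnd]; refine List.isChain_iff_getElem.mpr ?_
    intro m h
    simp only [List.length_ofFn] at h
    have := halt m (by omega)
    simpa [List.get_ofFn] using this
  have hmemw : ∀ p ∈ w, p.1 ∈ Alg p.2 := by
    intro p hp
    rw [hw, List.mem_ofFn] at hp
    obtain ⟨m, hm⟩ := hp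
    rw [← hm]; exact hamem m
  have hcentw : ∀ p ∈ w, φ p.1 = 0 := by
    intro p hp
    rw [hw, List.mem_ofFn] at hp
    obtain ⟨m, hm⟩ := hp
    rw [← hm]; exact hacent m
  have hwne : w ≠ [] := List.ne_nil_of_length_pos (by omega)
  have hphi0 : φ (List.ofFn a).prod = 0 := by
    rw [← hwfst]; exact free_word φ Alg hfree w hwne hmemw hcentw hchw
  -- the master formula
  have master : φ (D (List.ofFn a).prod)
      = ∑ m : Fin n, φ (D (a m)) *
          (if ((w.take (m : ℕ)).reverse.map Prod.snd) = ((w.drop ((m : ℕ) + 1)).map Prod.snd)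
           then (((w.take (m : ℕ)).reverse.zip (w.drop ((m : ℕ) + 1))).map
                  (fun p => φ (p.1.1 * p.2.1))).prod
           else 0) := by
    rw [D_prod_fin D hD, map_sum]
    refine Finset.sum_congr rfl fun m _ => ?_
    have hmn := m.isLt
    have htake : (List.ofFn a).take (m : ℕ) = (w.take (m : ℕ)).map Prod.fst := by
      rw [← hwfst, List.map_take]
    have hdrop : (List.ofFn a).drop ((m : ℕ) + 1) = (w.drop ((m : ℕ) + 1)).map Prod.fst := by
      rw [← hwfst, List.map_drop]
    set c : A := D (a m) - (φ (D (a m))) • (1 : A) with hc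
    have hDa : D (a m) = c + (φ (D (a m))) • (1 : A) := by rw [hc]; abel
    have hcmem : c ∈ Alg (i m) := by
      exact Subalgebra.sub_mem _ (hDinv (i m) (a m) (hamem m))
        (Subalgebra.smul_mem _ (Subalgebra.one_mem _) _)
    have hccent : φ c = 0 := by
      rw [hc, map_sub, map_smul, hφ1]; simp
    have expand : ((List.ofFn a).take (m : ℕ)).prod * D (a m) * ((List.ofFn a).drop ((m : ℕ) + 1)).prod
        = ((List.ofFn a).take (m : ℕ)).prod * c * ((List.ofFn a).drop ((m : ℕ) + 1)).prod
          + φ (D (a m)) • (((List.ofFn a).take (m : ℕ)).prod * ((List.ofFn a).drop ((m : ℕ) + 1)).prod) := by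
      conv_lhs => rw [hDa]
      simp [mul_add, add_mul, mul_smul_comm, smul_mul_assoc]
    rw [expand, map_add, map_smul, smul_eq_mul]
    -- the word with `c` in the middle is centered alternating
    have hwdec : w.take (m : ℕ) ++ w[(m : ℕ)]'(by omega) :: w.drop ((m : ℕ) + 1) = w := by
      rw [← List.drop_eq_getElem_cons, List.take_append_drop]
    have hWsnd : (w.take (m : ℕ) ++ (c, i m) :: w.drop ((m : ℕ) + 1)).map Prod.snd
        = w.map Prod.snd := by
      conv_rhs => rw [← hwdec]
      rw [List.map_append, List.map_append, List.map_cons, List.map_cons,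
        hwget (m : ℕ) (by omega) hmn]
    have hfirst : φ (((List.ofFn a).take (m : ℕ)).prod * c * ((List.ofFn a).drop ((m : ℕ) + 1)).prod) = 0 := by
      have := free_word φ Alg hfree (w.take (m : ℕ) ++ (c, i m) :: w.drop ((m : ℕ) + 1))
        (by simp)
        (by intro p hp
            rcases List.mem_append.mp hp with h | h
            · exact hmemw p (List.mem_of_mem_take h)
            · rcases List.mem_cons.mp h with h | h
              · rw [h]; exact hcmem
              · exact hmemw p (List.mem_of_mem_drop h))
        (by intro p hp
            rcases List.mem_append.mp hp with h | h
            · exact hcentw p (List.mem_of_mem_take h)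
            · rcases List.mem_cons.mp h with h | h
              · rw [h]; exact hccent
              · exact hcentw p (List.mem_of_mem_drop h))
        (by rw [hWsnd]; exact hchw)
      rw [List.map_append, List.prod_append, List.map_cons, List.prod_cons,
        ← mul_assoc] at this
      simpa [List.map_take, List.map_drop, hwfst] using this
    rw [hfirst, zero_add]
    congr 1
    -- apply collapse
    have hcol := collapse φ Alg hφ1 hfree ((w.take (m : ℕ)).reverse) (w.drop ((m : ℕ) + 1))
      (fun p hp => hmemw p (List.mem_of_mem_take (List.mem_reverse.mp hp)))
      (fun p hp => hcentw p (List.mem_of_mem_take (List.mem_reverse.mp hp)))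
      (fun p hp => hmemw p (List.mem_of_mem_drop hp))
      (fun p hp => hcentw p (List.mem_of_mem_drop hp))
      (by rw [List.map_reverse]; refine List.isChain_reverse.mpr ?_; rw [List.map_take]
          exact List.IsChain.imp (fun a b h => Ne.symm h) ((List.IsChain.take hchw _).imp (fun a b h => h))
          )
      (by rw [List.map_drop]; exact List.IsChain.drop hchw _)
    rw [List.reverse_reverse] at hcol
    rw [htake, hdrop, hcol]
  have hieq : ∀ (p : Fin n) (q : ℕ) (hq : q < n), (p : ℕ) = q → i p = i ⟨q, hq⟩ := by
    intro p q hq h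
    exact congrArg i (Fin.ext h)
  have hmapsnd_take : ∀ m : Fin n, (w.take (m : ℕ)).reverse.map Prod.snd
      = ((List.ofFn i).take (m : ℕ)).reverse := by
    intro m; rw [← hwsnd, List.map_reverse, List.map_take]
  have hmapsnd_drop : ∀ m : Fin n, (w.drop ((m : ℕ) + 1)).map Prod.snd
      = (List.ofFn i).drop ((m : ℕ) + 1) := by
    intro m; rw [← hwsnd, List.map_drop]
  -- characterization of the condition
  have hcond : ∀ m : Fin n,
      (((w.take (m : ℕ)).reverse.map Prod.snd) = ((w.drop ((m : ℕ) + 1)).map Prod.snd))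
      ↔ ((m : ℕ) + (m : ℕ) + 1 = n ∧ ∀ j : Fin n, i j = i j.rev) := by
    intro m
    have hmn := m.isLt
    rw [hmapsnd_take, hmapsnd_drop]
    constructor
    · intro hcnd
      have hlen := congrArg List.length hcnd
      simp only [List.length_reverse, List.length_take, List.length_drop,
        List.length_ofFn] at hlen
      have h2 : (m : ℕ) + (m : ℕ) + 1 = n := by omega
      have hg : ∀ (t : ℕ) (ht : t < (m : ℕ)),
          i ⟨(m : ℕ) - 1 - t, by omega⟩ = i ⟨(m : ℕ) + 1 + t, by omega⟩ := by
        intro t ht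
        have h1 : t < (((List.ofFn i).take (m : ℕ)).reverse).length := by simp; omega
        have hget := List.getElem_of_eq hcnd h1
        simp only [List.getElem_reverse, List.getElem_take, List.getElem_drop,
          List.getElem_ofFn, List.length_take, List.length_ofFn] at hget
        refine Eq.trans (Eq.trans ?_ hget) ?_
        · exact congrArg i (Fin.ext (by simp))
        · exact congrArg i (Fin.ext (by simp))
      refine ⟨h2, ?_⟩
      intro j
      have hjrev : (j.rev : ℕ) = n - ((j : ℕ) + 1) := Fin.val_rev j
      rcases lt_trichotomy (j : ℕ) (m : ℕ) with hj | hj | hj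
      · have := hg ((m : ℕ) - 1 - (j : ℕ)) (by omega)
        calc i j = i ⟨(m : ℕ) - 1 - ((m : ℕ) - 1 - (j : ℕ)), by omega⟩ :=
              hieq _ _ _ (by omega)
          _ = i ⟨(m : ℕ) + 1 + ((m : ℕ) - 1 - (j : ℕ)), by omega⟩ := this
          _ = i j.rev := (hieq _ _ _ (by omega)).symm
      · exact congrArg i (Fin.ext (by omega))
      · have := hg ((j : ℕ) - ((m : ℕ) + 1)) (by omega)
        calc i j = i ⟨(m : ℕ) + 1 + ((j : ℕ) - ((m : ℕ) + 1)), by omega⟩ :=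
              hieq _ _ _ (by omega)
          _ = i ⟨(m : ℕ) - 1 - ((j : ℕ) - ((m : ℕ) + 1)), by omega⟩ := this.symm
          _ = i j.rev := (hieq _ _ _ (by omega)).symm
    · rintro ⟨h2, hsym⟩
      apply List.ext_getElem (by simp; omega)
      intro t h1 h1'
      simp only [List.length_reverse, List.length_take, List.length_ofFn] at h1
      simp only [List.getElem_reverse, List.getElem_take, List.getElem_drop,
        List.getElem_ofFn, List.length_take, List.length_ofFn]
      have hs := hsym ⟨(m : ℕ) - 1 - t, by omega⟩
      have hrv : ((⟨(m : ℕ) - 1 - t, by omega⟩ : Fin n).rev : ℕ)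
          = n - (((m : ℕ) - 1 - t) + 1) := Fin.val_rev _
      calc i _ = i ⟨(m : ℕ) - 1 - t, by omega⟩ := congrArg i (Fin.ext (by simp))
        _ = i (⟨(m : ℕ) - 1 - t, by omega⟩ : Fin n).rev := hs
        _ = i _ := congrArg i (Fin.ext (by simp [hrv]; omega))
  refine ⟨hphi0, ?_, ?_⟩
  · rintro ⟨hodd, hsym⟩
    have hodd' : n % 2 = 1 := Nat.odd_iff.mp hodd
    set m₀ : Fin n := ⟨(n - 1) / 2, by omega⟩ with hm₀
    beta_reduce
    rw [master, Finset.sum_eq_single_of_mem m₀ (Finset.mem_univ _) ?side]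
    case side =>
      intro b _ hbne
      rw [if_neg, mul_zero]
      intro hcnd
      exact hbne (Fin.ext (by have := ((hcond b).mp hcnd).1; simp [hm₀]; omega))
    rw [if_pos ((hcond m₀).mpr ⟨by simp [hm₀]; omega, hsym⟩)]
    rw [mul_comm]
    congr 1
    · -- the pairing product
      have hm₀v : (m₀ : ℕ) = (n - 1) / 2 := rfl
      have hpair : ((w.take ((m₀ : ℕ))).reverse.zip (w.drop ((m₀ : ℕ) + 1))).map
            (fun p => φ (p.1.1 * p.2.1))
          = List.ofFn (fun t : Fin ((n - 1) / 2) =>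
              φ (a ⟨(n - 1) / 2 - 1 - (t : ℕ), by omega⟩ *
                 a ⟨(n - 1) / 2 + 1 + (t : ℕ), by omega⟩)) := by
        apply List.ext_getElem
        · simp only [List.length_map, List.length_zip, List.length_reverse,
            List.length_take, List.length_drop, List.length_ofFn, hwlen, hm₀v]
          omega
        intro t h1 h2
        simp only [List.length_map, List.length_zip, List.length_reverse,
          List.length_take, List.length_drop, hwlen, hm₀v] at h1
        simp only [List.getElem_map, List.getElem_zip, List.getElem_ofFn,
          List.getElem_reverse, List.getElem_take, List.getElem_drop,
          List.length_take, List.length_reverse, hwlen, hw, hm₀v, List.length_ofFn]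
        exact congrArg φ (congrArg₂ (· * ·)
          (congrArg a (Fin.mk_eq_mk.mpr (by omega)))
          (congrArg a (Fin.mk_eq_mk.mpr (by omega))))
      rw [hpair, List.prod_ofFn]
      refine Fintype.prod_bijective Fin.rev Fin.rev_bijective _ _ fun t => ?_
      have hrt : (t.rev : ℕ) = (n - 1) / 2 - ((t : ℕ) + 1) := Fin.val_rev t
      have htlt := t.isLt
      exact congrArg φ (congrArg₂ (· * ·)
        (congrArg a (Fin.ext (by simp [hrt]; omega)))
        (congrArg a (Fin.ext (by simp [hrt]; omega))))
    · exact congrArg (fun x => φ (D x)) (congrArg a (Fin.ext (by simp [hm₀]; omega)))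
  · intro hnot
    beta_reduce
    rw [master]
    refine Finset.sum_eq_zero fun m _ => ?_
    rw [if_neg, mul_zero]
    intro hcnd
    obtain ⟨hlen, hsym⟩ := (hcond m).mp hcnd
    exact hnot ⟨by rw [Nat.odd_iff]; omega, hsym⟩

end InfFree
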